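/- The multilinear extension copula satisfies Sklar's representation: for all (x₁,…,x_d) ∈ ℝ^d, H(x₁,…,x_d) = C^⊞(F₁(x₁),…,F_d(x_d)). -/

import Mathlib

open MeasureTheory Filter Topology

noncomputable section

/-- Generalized inverse `F⁻¹(u) = inf {x | F x ≥ u}` of a distribution function,
with the convention `F⁻¹ 0 = -1`. -/
def genInv (F : ℝ → ℝ) (u : ℝ) : ℝ :=
  if u = 0 then -1 else sInf {x : ℝ | u ≤ F x}

/-- Multilinear extension `F^⊞(x) = ∫₀¹ F (x + u) du` of a univariate distribution function. -/
def mlin1 (F : ℝ → ℝ) (x : ℝ) : ℝ := ∫ u in Set.Icc (0:ℝ) 1, F (x + u)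

/-- Multilinear extension `H^⊞(x) = ∫_{[0,1]^d} H (x + u) du` of a `d`-variate
distribution function. -/
def mlin (d : ℕ) (H : (Fin d → ℝ) → ℝ) (x : Fin d → ℝ) : ℝ :=
  ∫ u in Set.Icc (0 : Fin d → ℝ) 1, H (x + u)

/-- The multilinear extension copula `C^⊞(u) = H^⊞(F₁^⊞⁻¹(u₁),…,F_d^⊞⁻¹(u_d))`
of `H` with margins `F`. -/
def mlinCopula (d : ℕ) (H : (Fin d → ℝ) → ℝ) (F : Fin d → ℝ → ℝ) (u : Fin d → ℝ) : ℝ :=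
  mlin d H (fun j => genInv (mlin1 (F j)) (u j))

lemma mlin1_eq (F : ℝ → ℝ) (hstep : ∀ t : ℝ, F t = F ((⌊t⌋ : ℤ) : ℝ)) (z : ℝ) :
    mlin1 F z = (((⌊z⌋:ℤ):ℝ) + 1 - z) * F ((⌊z⌋:ℤ):ℝ)
      + (z - ((⌊z⌋:ℤ):ℝ)) * F (((⌊z⌋:ℤ):ℝ) + 1) := by
  set m : ℤ := ⌊z⌋ with hm
  set c : ℝ := (m:ℝ) + 1 - z with hc
  have hmz : (m:ℝ) ≤ z := Int.floor_le z
  have hzm : z < (m:ℝ) + 1 := Int.lt_floor_add_one z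
  have h0c : 0 < c := by simp only [hc]; linarith
  have hc1 : c ≤ 1 := by simp only [hc]; linarith
  have e1 : ∀ t ∈ Set.Ioo (0:ℝ) c, F (z + t) = F ((m:ℝ)) := by
    intro t ht
    rw [hstep (z + t)]
    congr 2
    exact Int.floor_eq_iff.mpr ⟨by linarith [ht.1], by linarith [ht.2]⟩
  have e2 : ∀ t ∈ Set.Ioc c 1, F (z + t) = F ((m:ℝ) + 1) := by
    intro t ht
    rw [hstep (z + t)]
    have : ⌊z + t⌋ = m + 1 := by
      apply Int.floor_eq_iff.mpr
      constructor
      · push_cast; linarith [ht.1]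
      · push_cast; linarith [ht.2]
    rw [this]; push_cast; ring_nf
  have hae1 : ∀ᵐ t ∂volume, t ∈ Set.Ioc (0:ℝ) c → F (z + t) = F ((m:ℝ)) := by
    rw [ae_iff]
    refine measure_mono_null ?_ (measure_singleton c)
    intro t ht
    simp only [Set.mem_setOf_eq, not_forall] at ht
    by_contra htc
    simp only [Set.mem_singleton_iff] at htc
    rcases ht with ⟨ht1, ht2⟩
    exact ht2 (e1 t ⟨ht1.1, lt_of_le_of_ne ht1.2 htc⟩)
  have hae2 : ∀ᵐ t ∂volume, t ∈ Set.Ioc c 1 → F (z + t) = F ((m:ℝ) + 1) :=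
    Filter.Eventually.of_forall e2
  have hi1 : IntegrableOn (fun t => F (z + t)) (Set.Ioc 0 c) := by
    have hconst : IntegrableOn (fun _ : ℝ => F ((m:ℝ))) (Set.Ioc 0 c) := by
      refine integrableOn_const ?_
      rw [Real.volume_Ioc]; exact ENNReal.ofReal_ne_top
    exact hconst.congr (EventuallyEq.symm ((ae_restrict_iff' measurableSet_Ioc).2 hae1))
  have hi2 : IntegrableOn (fun t => F (z + t)) (Set.Ioc c 1) := by
    have hconst : IntegrableOn (fun _ : ℝ => F ((m:ℝ) + 1)) (Set.Ioc c 1) := by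
      refine integrableOn_const ?_
      rw [Real.volume_Ioc]; exact ENNReal.ofReal_ne_top
    exact hconst.congr (EventuallyEq.symm ((ae_restrict_iff' measurableSet_Ioc).2 hae2))
  have v1 : ∫ t in Set.Ioc (0:ℝ) c, F (z + t) = c * F ((m:ℝ)) := by
    rw [setIntegral_congr_ae measurableSet_Ioc hae1, setIntegral_const, measureReal_def, Real.volume_Ioc,
      ENNReal.toReal_ofReal (by linarith), smul_eq_mul, sub_zero]
  have v2 : ∫ t in Set.Ioc c 1, F (z + t) = (1 - c) * F ((m:ℝ) + 1) := by
    rw [setIntegral_congr_ae measurableSet_Ioc hae2, setIntegral_const, measureReal_def, Real.volume_Ioc,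
      ENNReal.toReal_ofReal (by linarith), smul_eq_mul]
  rw [mlin1, MeasureTheory.integral_Icc_eq_integral_Ioc,
    ← Set.Ioc_union_Ioc_eq_Ioc h0c.le hc1,
    setIntegral_union (Set.Ioc_disjoint_Ioc.2 ((min_le_left _ _).trans (le_max_right _ _))) measurableSet_Ioc hi1 hi2, v1, v2]
  simp only [hc]
  ring

lemma exists_genInv_eq (F : ℝ → ℝ) (hmono : Monotone F)
    (hstep : ∀ t : ℝ, F t = F ((⌊t⌋ : ℤ) : ℝ)) (hneg : ∀ t : ℝ, t < 0 → F t = 0)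
    (x : ℝ) (hu : 0 < F x) :
    ∃ n₀ : ℕ, genInv (mlin1 F) (F x) = (n₀ : ℝ) ∧ F ((n₀:ℕ) : ℝ) = F x ∧ ((n₀:ℕ) : ℝ) ≤ x := by
  classical
  have hx0 : 0 ≤ x := by
    by_contra h
    push_neg at h
    rw [hneg x h] at hu
    exact lt_irrefl 0 hu
  have hcast : ((⌊x⌋.toNat : ℕ) : ℝ) = ((⌊x⌋ : ℤ) : ℝ) := by
    norm_cast
    exact Int.toNat_of_nonneg (Int.floor_nonneg.2 hx0)
  have hex : ∃ n : ℕ, F x ≤ F (n : ℝ) := by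
    refine ⟨⌊x⌋.toNat, ?_⟩
    rw [hcast, ← hstep x]
  set n₀ := Nat.find hex with hn₀
  have hfs : F x ≤ F (n₀ : ℝ) := Nat.find_spec hex
  have hn₀le : (n₀ : ℝ) ≤ x := by
    have h1 : n₀ ≤ ⌊x⌋.toNat := Nat.find_min' hex (by rw [hcast, ← hstep x])
    have : ((n₀ : ℕ) : ℝ) ≤ ((⌊x⌋.toNat : ℕ) : ℝ) := by exact_mod_cast h1
    rw [hcast] at this
    exact this.trans (Int.floor_le x)
  have hFeq : F (n₀ : ℝ) = F x := le_antisymm (hmono hn₀le) hfs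
  have hlow : ∀ t : ℝ, t < (n₀ : ℝ) → F t < F x := by
    intro t ht
    rcases Nat.eq_zero_or_pos n₀ with h0 | hpos
    · rw [h0] at ht
      simp only [Nat.cast_zero] at ht
      rw [hneg t ht]; exact hu
    · obtain ⟨p, hp⟩ := Nat.exists_eq_succ_of_ne_zero hpos.ne'
      have hpn : F ((p:ℕ) : ℝ) < F x := by
        have := Nat.find_min hex (m := p) (by omega)
        push_neg at this
        exact this
      have hft : ⌊t⌋ < (n₀ : ℤ) := by
        rw [Int.floor_lt]; exact_mod_cast ht
      have hfle : ((⌊t⌋ : ℤ) : ℝ) ≤ ((p:ℕ) : ℝ) := by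
        have : ⌊t⌋ ≤ (p : ℤ) := by omega
        exact_mod_cast this
      calc F t = F ((⌊t⌋ : ℤ) : ℝ) := hstep t
        _ ≤ F ((p:ℕ) : ℝ) := hmono hfle
        _ < F x := hpn
  have hmem : F x ≤ mlin1 F (n₀ : ℝ) := by
    rw [mlin1_eq F hstep]
    rw [show ⌊((n₀:ℕ) : ℝ)⌋ = (n₀ : ℤ) from Int.floor_natCast n₀]
    push_cast
    ring_nf
    rw [hFeq]
  have hlb : ∀ z ∈ {z : ℝ | F x ≤ mlin1 F z}, (n₀ : ℝ) ≤ z := by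
    intro z hz
    by_contra h
    push_neg at h
    have hform := mlin1_eq F hstep z
    set m : ℤ := ⌊z⌋ with hm
    have hmz : (m:ℝ) ≤ z := Int.floor_le z
    have hzm : z < (m:ℝ) + 1 := Int.lt_floor_add_one z
    have hm1 : (m:ℝ) + 1 ≤ (n₀ : ℝ) := by
      have : m < (n₀ : ℤ) := by rw [hm, Int.floor_lt]; exact_mod_cast h
      have : m + 1 ≤ (n₀ : ℤ) := this
      exact_mod_cast this
    have hFm : F ((m:ℝ)) < F x := hlow _ (by linarith)
    have hFm1 : F ((m:ℝ) + 1) ≤ F x := by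
      calc F ((m:ℝ) + 1) ≤ F ((n₀ : ℕ) : ℝ) := hmono hm1
        _ = F x := hFeq
    have hcontra : mlin1 F z < F x := by
      rw [hform]
      have h1 : 0 < (m:ℝ) + 1 - z := by linarith
      have h2 : 0 ≤ z - (m:ℝ) := by linarith
      nlinarith
    rw [Set.mem_setOf_eq] at hz
    linarith
  refine ⟨n₀, ?_, hFeq, hn₀le⟩
  rw [genInv, if_neg hu.ne']
  exact le_antisymm (csInf_le ⟨(n₀ : ℝ), hlb⟩ hmem) (le_csInf ⟨_, hmem⟩ hlb)

/-- the multilinear extension copula satisfies Sklar's representation: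
`H(x₁,…,x_d) = C^⊞(F₁(x₁),…,F_d(x_d))` for all `(x₁,…,x_d) ∈ ℝ^d`. -/
theorem multilinear_copula_sklar
    {Ω : Type*} [MeasurableSpace Ω] (P : Measure Ω) [IsProbabilityMeasure P]
    (d : ℕ) (hd : 1 ≤ d) (X : Ω → Fin d → ℝ) (hX : Measurable X)
    (hNat : ∀ ω j, ∃ k : ℕ, X ω j = k)
    (H : (Fin d → ℝ) → ℝ) (F : Fin d → ℝ → ℝ)
    (hH : ∀ x, H x = (P {ω | ∀ j, X ω j ≤ x j}).toReal)
    (hF : ∀ j x, F j x = (P {ω | X ω j ≤ x}).toReal) :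
    ∀ x : Fin d → ℝ, H x = mlinCopula d H F (fun j => F j (x j)) := by
  intro x
  classical
  -- basic facts about margins
  have hmono : ∀ j, Monotone (F j) := by
    intro j a b hab
    rw [hF, hF]
    exact ENNReal.toReal_mono (measure_ne_top P _)
      (measure_mono (fun ω h => le_trans h hab))
  have hstep : ∀ j (t : ℝ), F j t = F j ((⌊t⌋ : ℤ) : ℝ) := by
    intro j t
    rw [hF, hF]
    congr 2
    ext ω
    obtain ⟨k, hk⟩ := hNat ω j
    simp only [Set.mem_setOf_eq, hk]
    constructor
    · intro h
      have : (k : ℤ) ≤ ⌊t⌋ := Int.le_floor.2 (by exact_mod_cast h)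
      exact_mod_cast this
    · intro h
      exact h.trans (Int.floor_le t)
  have hneg : ∀ j (t : ℝ), t < 0 → F j t = 0 := by
    intro j t ht
    rw [hF]
    have : {ω | X ω j ≤ t} = ∅ := by
      ext ω
      obtain ⟨k, hk⟩ := hNat ω j
      simp only [Set.mem_setOf_eq, hk, Set.mem_empty_iff_false, iff_false, not_le]
      calc t < 0 := ht
        _ ≤ (k : ℝ) := Nat.cast_nonneg k
    rw [this, measure_empty, ENNReal.toReal_zero]
  set y : Fin d → ℝ := fun j => genInv (mlin1 (F j)) (F j (x j)) with hy
  -- key pointwise identity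
  have key : ∀ v : Fin d → ℝ, (∀ j, v j ∈ Set.Ioo (0:ℝ) 1) → H (y + v) = H x := by
    intro v hv
    rw [hH, hH]
    congr 1
    simp only [Pi.add_apply]
    by_cases hpos : ∀ j, 0 < F j (x j)
    · choose n₀ hn₀ hFn₀ hle using fun j =>
        exists_genInv_eq (F j) (hmono j) (hstep j) (hneg j) (x j) (hpos j)
      have hyj : ∀ j, y j = (n₀ j : ℝ) := fun j => hn₀ j
      have hBA : ∀ j, {ω | X ω j ≤ y j + v j} ⊆ {ω | X ω j ≤ x j} := by
        intro j ω hω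
        obtain ⟨k, hk⟩ := hNat ω j
        simp only [Set.mem_setOf_eq, hk] at hω ⊢
        rw [hyj j] at hω
        have hk1 : (k : ℝ) < (n₀ j : ℝ) + 1 := lt_of_le_of_lt hω (by linarith [(hv j).2])
        have : k ≤ n₀ j := by exact_mod_cast Nat.lt_succ_iff.mp (by exact_mod_cast hk1)
        calc (k : ℝ) ≤ (n₀ j : ℝ) := by exact_mod_cast this
          _ ≤ x j := hle j
      have hPeq : ∀ j, P {ω | X ω j ≤ x j} = P {ω | X ω j ≤ y j + v j} := by
        intro j
        have h1 : F j (y j + v j) = F j (x j) := by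
          rw [hyj j, hstep j ((n₀ j : ℝ) + v j)]
          have hfl : ⌊(n₀ j : ℝ) + v j⌋ = (n₀ j : ℤ) := by
            rw [Int.floor_eq_iff]
            constructor
            · push_cast; linarith [(hv j).1]
            · push_cast; linarith [(hv j).2]
          rw [hfl]
          rw [show ((n₀ j : ℤ) : ℝ) = ((n₀ j : ℕ) : ℝ) by push_cast; ring]
          exact hFn₀ j
        rw [hF, hF] at h1
        exact ((ENNReal.toReal_eq_toReal_iff' (measure_ne_top P _) (measure_ne_top P _)).1 h1.symm)
      have hmB : ∀ j, MeasurableSet {ω | X ω j ≤ y j + v j} := by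
        intro j
        exact ((measurable_pi_apply j).comp hX) measurableSet_Iic
      have hdiff : ∀ j, P ({ω | X ω j ≤ x j} \ {ω | X ω j ≤ y j + v j}) = 0 := by
        intro j
        rw [measure_diff (hBA j) (hmB j).nullMeasurableSet (measure_ne_top P _),
          hPeq j, tsub_self]
      apply le_antisymm
      · exact measure_mono (fun ω hω j => hBA j (hω j))
      · calc P {ω | ∀ j, X ω j ≤ x j}
            ≤ P ({ω | ∀ j, X ω j ≤ y j + v j} ∪
                ⋃ j, ({ω | X ω j ≤ x j} \ {ω | X ω j ≤ y j + v j})) := by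
              apply measure_mono
              intro ω hω
              by_cases hB : ∀ j, X ω j ≤ y j + v j
              · exact Or.inl hB
              · push_neg at hB
                obtain ⟨j, hj⟩ := hB
                exact Or.inr (Set.mem_iUnion.2 ⟨j, ⟨hω j, not_le.2 hj⟩⟩)
          _ ≤ P {ω | ∀ j, X ω j ≤ y j + v j}
              + P (⋃ j, ({ω | X ω j ≤ x j} \ {ω | X ω j ≤ y j + v j})) :=
            measure_union_le _ _
          _ = P {ω | ∀ j, X ω j ≤ y j + v j} := by
            rw [measure_iUnion_null hdiff, add_zero]
    · push_neg at hpos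
      obtain ⟨j₀, hj₀⟩ := hpos
      have hu0 : F j₀ (x j₀) = 0 := le_antisymm hj₀ (by rw [hF]; exact ENNReal.toReal_nonneg)
      have hyj₀ : y j₀ = -1 := by
        simp only [hy, genInv, hu0, if_pos rfl]
        rfl
      have h2 : {ω | ∀ j, X ω j ≤ y j + v j} = ∅ := by
        ext ω
        simp only [Set.mem_setOf_eq, Set.mem_empty_iff_false, iff_false, not_forall]
        refine ⟨j₀, ?_⟩
        obtain ⟨k, hk⟩ := hNat ω j₀
        rw [hk, hyj₀, not_le]
        calc (-1 : ℝ) + v j₀ < 0 := by linarith [(hv j₀).2]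
          _ ≤ (k : ℝ) := Nat.cast_nonneg k
      have h1 : P {ω | ∀ j, X ω j ≤ x j} = 0 := by
        have hP0 : P {ω | X ω j₀ ≤ x j₀} = 0 := by
          have := hF j₀ (x j₀)
          rw [hu0] at this
          exact (ENNReal.toReal_eq_zero_iff _).1 this.symm |>.resolve_right (measure_ne_top P _)
        exact le_antisymm (le_trans (measure_mono (fun ω hω => hω j₀)) hP0.le) zero_le
      rw [h2, h1, measure_empty]
  -- conclude by integrating
  show H x = mlin d H y
  rw [mlin]
  have hIcc : Set.Icc (0 : Fin d → ℝ) 1 = Set.pi Set.univ (fun _ => Set.Icc (0:ℝ) 1) := by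
    rw [← Set.pi_univ_Icc]; rfl
  have hvolIcc : volume (Set.Icc (0 : Fin d → ℝ) 1) = 1 := by
    rw [hIcc, volume_pi_pi]
    simp [Real.volume_Icc]
  have hvolIoo : volume (Set.pi Set.univ (fun _ : Fin d => Set.Ioo (0:ℝ) 1)) = 1 := by
    rw [volume_pi_pi]
    simp [Real.volume_Ioo]
  have hsub : Set.pi Set.univ (fun _ : Fin d => Set.Ioo (0:ℝ) 1) ⊆ Set.Icc 0 1 := by
    rw [hIcc]
    exact Set.pi_mono (fun i _ => Set.Ioo_subset_Icc_self)
  have hnull : volume (Set.Icc (0 : Fin d → ℝ) 1 \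
      Set.pi Set.univ (fun _ : Fin d => Set.Ioo (0:ℝ) 1)) = 0 := by
    rw [measure_diff hsub (MeasurableSet.univ_pi fun _ => measurableSet_Ioo).nullMeasurableSet
      (by rw [hvolIoo]; exact ENNReal.one_ne_top), hvolIcc, hvolIoo, tsub_self]
  have hcongr : ∫ v in Set.Icc (0 : Fin d → ℝ) 1, H (y + v)
      = ∫ v in Set.Icc (0 : Fin d → ℝ) 1, H x := by
    apply setIntegral_congr_ae measurableSet_Icc
    rw [ae_iff]
    refine measure_mono_null ?_ hnull
    intro v hv
    simp only [Set.mem_setOf_eq, not_forall] at hv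
    obtain ⟨hv1, hv2⟩ := hv
    refine ⟨hv1, fun hmem => hv2 ?_⟩
    exact key v (fun j => hmem j (Set.mem_univ j))
  rw [hcongr, setIntegral_const, measureReal_def, hvolIcc]
  simp
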